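/- For every ρ ∈ Γ, the subspace S(ℓ1,ℓ2,ℓ3;ρ,Γ) = x^ρ·S(ℓ1,ℓ2,ℓ3;Γ) of W(ℓ1,ℓ2,ℓ3;Γ) is closed under the Lie bracket, i.e., it is a Lie subalgebra of W(ℓ1,ℓ2,ℓ3;Γ). -/

import Mathlib

open scoped BigOperators

namespace SXDiv

variable (F : Type*) [Field F] [CharZero F]
variable (l1 l2 l3 : ℕ) (Γ : AddSubgroup (Fin (l2 + l3) → F))

/-- The polynomial ring `F[t_1,...,t_{ℓ1+ℓ2}]`. -/
abbrev R : Type _ := MvPolynomial (Fin (l1 + l2)) F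

/-- The algebra `A(ℓ1,ℓ2,ℓ3;Γ)`: free `F[t]`-module with basis `{x^α : α ∈ Γ}`. -/
abbrev A : Type _ := AddMonoidAlgebra (R F l1 l2) Γ

/-- `x^α`. -/
noncomputable def xpow (α : Γ) : A F l1 l2 l3 Γ := AddMonoidAlgebra.single α 1

/-- `t_i`. -/
noncomputable def tvar (i : Fin (l1 + l2)) : A F l1 l2 l3 Γ :=
  AddMonoidAlgebra.single 0 (MvPolynomial.X i)

/-- `t^i x^α`. -/
noncomputable def xmon (α : Γ) (i : Fin (l1 + l2) →₀ ℕ) : A F l1 l2 l3 Γ :=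
  AddMonoidAlgebra.single α (MvPolynomial.monomial i 1)

/-- `∂_{t_i}`. -/
noncomputable def dt (i : Fin (l1 + l2)) : Module.End F (A F l1 l2 l3 Γ) :=
  (AddMonoidAlgebra.coeffLinearEquiv F).symm.toLinearMap ∘ₗ
    (Finsupp.mapRange.linearMap (MvPolynomial.pderiv i).toLinearMap :
      (Γ →₀ R F l1 l2) →ₗ[F] (Γ →₀ R F l1 l2)) ∘ₗ
    (AddMonoidAlgebra.coeffLinearEquiv F).toLinearMap

/-- `∂*_j`. -/
noncomputable def dstar (j : Fin (l2 + l3)) : Module.End F (A F l1 l2 l3 Γ) :=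
  (AddMonoidAlgebra.coeffLinearEquiv F).symm.toLinearMap ∘ₗ
    (Finsupp.lsum F fun α : Γ => ((α : Fin (l2 + l3) → F) j) • (Finsupp.lsingle α) :
      (Γ →₀ R F l1 l2) →ₗ[F] (Γ →₀ R F l1 l2)) ∘ₗ
    (AddMonoidAlgebra.coeffLinearEquiv F).toLinearMap

/-- `∂_i`, `1 ≤ i ≤ ℓ`. -/
noncomputable def part (i : Fin (l1 + l2 + l3)) : Module.End F (A F l1 l2 l3 Γ) :=
  if h : (i : ℕ) < l1 then dt F l1 l2 l3 Γ ⟨i, by omega⟩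
  else if h2 : (i : ℕ) < l1 + l2 then
    dstar F l1 l2 l3 Γ ⟨(i : ℕ) - l1, by omega⟩ + dt F l1 l2 l3 Γ ⟨(i : ℕ), h2⟩
  else dstar F l1 l2 l3 Γ ⟨(i : ℕ) - l1, by have := i.isLt; omega⟩

/-- The vector field `Σ_i u_i ∂_i` determined by the coefficient vector `u`. -/
noncomputable def act : (Fin (l1 + l2 + l3) → A F l1 l2 l3 Γ) →ₗ[F]
    Module.End F (A F l1 l2 l3 Γ) :=
  ∑ i : Fin (l1 + l2 + l3),
    ((LinearMap.llcomp F _ _ _).flip (part F l1 l2 l3 Γ i)) ∘ₗ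
      (LinearMap.mul F (A F l1 l2 l3 Γ)) ∘ₗ (LinearMap.proj i)

/-- The divergence `div (Σ_i u_i ∂_i) = Σ_i ∂_i(u_i)`. -/
noncomputable def divg : (Fin (l1 + l2 + l3) → A F l1 l2 l3 Γ) →ₗ[F] A F l1 l2 l3 Γ :=
  ∑ i : Fin (l1 + l2 + l3), (part F l1 l2 l3 Γ i) ∘ₗ (LinearMap.proj i)

/-- Componentwise multiplication of a coefficient vector by `x^ρ`. -/
noncomputable def xscale (ρ : Γ) : (Fin (l1 + l2 + l3) → A F l1 l2 l3 Γ) →ₗ[F]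
    (Fin (l1 + l2 + l3) → A F l1 l2 l3 Γ) :=
  LinearMap.pi fun i => (LinearMap.mul F (A F l1 l2 l3 Γ) (xpow F l1 l2 l3 Γ ρ)) ∘ₗ
    (LinearMap.proj i)

/-- `S(ℓ1,ℓ2,ℓ3;ρ,Γ) = x^ρ·{∂ ∈ W : div ∂ = 0}` as a subspace of `End_F(A)`. -/
noncomputable def Ssub (ρ : Γ) : Submodule F (Module.End F (A F l1 l2 l3 Γ)) :=
  Submodule.map ((act F l1 l2 l3 Γ) ∘ₗ (xscale F l1 l2 l3 Γ ρ))
    (LinearMap.ker (divg F l1 l2 l3 Γ))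

/-- `D_{p,q}(u) = x^ρ(∂_q(x^{-ρ}u)∂_p − ∂_p(x^{-ρ}u)∂_q)`. -/
noncomputable def Dpq (ρ : Γ) (p q : Fin (l1 + l2 + l3)) (u : A F l1 l2 l3 Γ) :
    Module.End F (A F l1 l2 l3 Γ) :=
  act F l1 l2 l3 Γ
    (Pi.single p (xpow F l1 l2 l3 Γ ρ * (part F l1 l2 l3 Γ q (xpow F l1 l2 l3 Γ (-ρ) * u)))
     - Pi.single q (xpow F l1 l2 l3 Γ ρ * (part F l1 l2 l3 Γ p (xpow F l1 l2 l3 Γ (-ρ) * u))))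

/-- The homogeneous component `S_α`. -/
noncomputable def Sgr (ρ : Γ) (α : Γ) : Submodule F (Module.End F (A F l1 l2 l3 Γ)) :=
  Submodule.span F {E | ∃ (p q : Fin (l1 + l2 + l3)) (i : Fin (l1 + l2) →₀ ℕ),
    E = Dpq F l1 l2 l3 Γ ρ p q (xmon F l1 l2 l3 Γ α i)}

section Aux

open MvPolynomial in
private lemma pderiv_comm' {Rc σ : Type*} [CommRing Rc] (i j : σ) (f : MvPolynomial σ Rc) :
    pderiv i (pderiv j f) = pderiv j (pderiv i f) := by
  classical
  induction f using MvPolynomial.induction_on' with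
  | add p q hp hq => simp [hp, hq]
  | monomial s a =>
    by_cases hij : i = j
    · subst hij; rfl
    · simp only [pderiv_monomial]
      rw [Finsupp.tsub_apply, Finsupp.tsub_apply, Finsupp.single_eq_of_ne hij,
        Finsupp.single_eq_of_ne (Ne.symm hij), tsub_right_comm, tsub_zero, tsub_zero]
      ring_nf

variable (F : Type*) [Field F] [CharZero F]
variable (l1 l2 l3 : ℕ) (Γ : AddSubgroup (Fin (l2 + l3) → F))

local notation "𝔸" => A F l1 l2 l3 Γ
local notation "P" => part F l1 l2 l3 Γ
local notation "Act" => act F l1 l2 l3 Γ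
local notation "Dv" => divg F l1 l2 l3 Γ
local notation "Xp" => xpow F l1 l2 l3 Γ

lemma dt_single (i : Fin (l1 + l2)) (α : Γ) (f : R F l1 l2) :
    dt F l1 l2 l3 Γ i (AddMonoidAlgebra.single α f)
      = AddMonoidAlgebra.single α (MvPolynomial.pderiv i f) := by
  exact congrArg AddMonoidAlgebra.ofCoeff
    (Finsupp.mapRange_single (f := (MvPolynomial.pderiv i).toLinearMap) (hf := map_zero _))

lemma dstar_single (j : Fin (l2 + l3)) (α : Γ) (f : R F l1 l2) :
    dstar F l1 l2 l3 Γ j (AddMonoidAlgebra.single α f)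
      = ((α : Fin (l2 + l3) → F) j) • AddMonoidAlgebra.single α f := by
  show AddMonoidAlgebra.ofCoeff (Finsupp.lsum F (fun α : Γ => ((α : Fin (l2 + l3) → F) j) •
    (Finsupp.lsingle (R := F) (M := R F l1 l2) α)) (Finsupp.single α f)) = _
  rw [Finsupp.lsum_single]; rfl

/-- Leibniz rule from the rule on singles. -/
lemma leibniz_of_single (D : Module.End F 𝔸)
    (h : ∀ (α β : Γ) (f g : R F l1 l2),
      D (AddMonoidAlgebra.single α f * AddMonoidAlgebra.single β g)
        = D (AddMonoidAlgebra.single α f) * AddMonoidAlgebra.single β g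
          + AddMonoidAlgebra.single α f * D (AddMonoidAlgebra.single β g)) :
    ∀ a b : 𝔸, D (a * b) = D a * b + a * D b := by
  intro a b
  induction a using AddMonoidAlgebra.induction_linear with
  | zero => simp
  | add a₁ a₂ h₁ h₂ =>
    rw [add_mul, map_add, h₁, h₂, map_add, add_mul]
    ring
  | single α f =>
    induction b using AddMonoidAlgebra.induction_linear with
    | zero => simp
    | add b₁ b₂ h₁ h₂ =>
      rw [mul_add, map_add, h₁, h₂, map_add, mul_add]
      ring
    | single β g => exact h α β f g

lemma comm_of_single (D E : Module.End F 𝔸)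
    (h : ∀ (α : Γ) (f : R F l1 l2),
      D (E (AddMonoidAlgebra.single α f)) = E (D (AddMonoidAlgebra.single α f))) :
    ∀ a : 𝔸, D (E a) = E (D a) := by
  intro a
  induction a using AddMonoidAlgebra.induction_linear with
  | zero => simp
  | add a₁ a₂ h₁ h₂ => rw [map_add, map_add, h₁, h₂, map_add, map_add]
  | single α f => exact h α f

lemma part_mul (i : Fin (l1 + l2 + l3)) (a b : 𝔸) :
    P i (a * b) = P i a * b + a * P i b := by
  have hdt : ∀ (i : Fin (l1 + l2)) (a b : 𝔸),
      dt F l1 l2 l3 Γ i (a * b)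
        = dt F l1 l2 l3 Γ i a * b + a * dt F l1 l2 l3 Γ i b := by
    intro i
    refine leibniz_of_single F l1 l2 l3 Γ _ fun α β f g => ?_
    rw [AddMonoidAlgebra.single_mul_single, dt_single, dt_single, dt_single,
      MvPolynomial.pderiv_mul, AddMonoidAlgebra.single_mul_single,
      AddMonoidAlgebra.single_mul_single, ← AddMonoidAlgebra.single_add]
  have hds : ∀ (j : Fin (l2 + l3)) (a b : 𝔸),
      dstar F l1 l2 l3 Γ j (a * b)
        = dstar F l1 l2 l3 Γ j a * b + a * dstar F l1 l2 l3 Γ j b := by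
    intro j
    refine leibniz_of_single F l1 l2 l3 Γ _ fun α β f g => ?_
    simp only [AddMonoidAlgebra.single_mul_single, dstar_single, smul_mul_assoc,
      mul_smul_comm, ← add_smul, AddSubgroup.coe_add, Pi.add_apply]
  unfold part
  split_ifs with h1 h2
  · exact hdt _ a b
  · simp only [LinearMap.add_apply]
    rw [hdt _ a b, hds _ a b]
    ring
  · exact hds _ a b

lemma commute_of_single (D E : Module.End F 𝔸)
    (h : ∀ (α : Γ) (f : R F l1 l2),
      D (E (AddMonoidAlgebra.single α f)) = E (D (AddMonoidAlgebra.single α f))) :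
    Commute D E :=
  LinearMap.ext fun a => comm_of_single F l1 l2 l3 Γ D E h a

set_option maxHeartbeats 800000 in
lemma part_comm (i j : Fin (l1 + l2 + l3)) (a : 𝔸) :
    P i (P j a) = P j (P i a) := by
  have hdtdt : ∀ (i j : Fin (l1 + l2)),
      Commute (dt F l1 l2 l3 Γ i) (dt F l1 l2 l3 Γ j) := by
    intro i j
    refine commute_of_single F l1 l2 l3 Γ _ _ fun α f => ?_
    rw [dt_single, dt_single, dt_single, dt_single, pderiv_comm']
  have hdsds : ∀ (j k : Fin (l2 + l3)),
      Commute (dstar F l1 l2 l3 Γ j) (dstar F l1 l2 l3 Γ k) := by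
    intro j k
    refine commute_of_single F l1 l2 l3 Γ _ _ fun α f => ?_
    simp only [dstar_single, map_smul]
    rw [smul_comm]
  have hdtds : ∀ (i : Fin (l1 + l2)) (k : Fin (l2 + l3)),
      Commute (dt F l1 l2 l3 Γ i) (dstar F l1 l2 l3 Γ k) := by
    intro i k
    refine commute_of_single F l1 l2 l3 Γ _ _ fun α f => ?_
    simp only [dstar_single, dt_single, map_smul]
  have key : Commute (P i) (P j) := by
    unfold part
    split_ifs
    · exact hdtdt _ _
    · exact (hdtds _ _).add_right (hdtdt _ _)
    · exact hdtds _ _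
    · exact ((hdtds _ _).symm).add_left (hdtdt _ _)
    · exact ((hdsds _ _).add_right ((hdtds _ _).symm)).add_left
        ((hdtds _ _).add_right (hdtdt _ _))
    · exact (hdsds _ _).add_left (hdtds _ _)
    · exact (hdtds _ _).symm
    · exact (hdsds _ _).add_right ((hdtds _ _).symm)
    · exact hdsds _ _
  calc P i (P j a) = (P i * P j) a := rfl
    _ = (P j * P i) a := by rw [key]
    _ = P j (P i a) := rfl

/-- The weight `c_j(α)` with `∂_j (x^α) = c_j(α) • x^α`. -/
noncomputable def cc (j : Fin (l1 + l2 + l3)) (α : Γ) : F :=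
  if _h : (j : ℕ) < l1 then 0
  else (α : Fin (l2 + l3) → F) ⟨(j : ℕ) - l1, by have := j.isLt; omega⟩

local notation "Cc" => cc F l1 l2 l3 Γ

lemma cc_neg (j : Fin (l1 + l2 + l3)) (α : Γ) : Cc j (-α) = - Cc j α := by
  unfold cc
  split_ifs <;> simp

lemma xpow_mul_xpow (α β : Γ) : Xp α * Xp β = Xp (α + β) := by
  rw [xpow, xpow, xpow, AddMonoidAlgebra.single_mul_single, mul_one]

lemma xpow_zero' : Xp (0 : Γ) = 1 := (AddMonoidAlgebra.one_def).symm

lemma part_xpow (j : Fin (l1 + l2 + l3)) (α : Γ) : P j (Xp α) = Cc j α • Xp α := by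
  unfold part cc xpow
  split_ifs with h1 h2
  · rw [dt_single, MvPolynomial.pderiv_one]
    simp
  · rw [LinearMap.add_apply, dt_single, MvPolynomial.pderiv_one, dstar_single]
    simp
  · rw [dstar_single]

lemma part_mul_xpow (j : Fin (l1 + l2 + l3)) (α : Γ) (b : 𝔸) :
    P j (Xp α * b) = Xp α * P j b + Cc j α • (Xp α * b) := by
  rw [part_mul, part_xpow, smul_mul_assoc, add_comm]

lemma act_apply (u : Fin (l1 + l2 + l3) → 𝔸) (a : 𝔸) :
    Act u a = ∑ i, u i * P i a := by
  rw [act]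
  simp only [LinearMap.coe_sum, Finset.sum_apply, LinearMap.sum_apply, LinearMap.comp_apply,
    LinearMap.proj_apply, LinearMap.flip_apply, LinearMap.llcomp_apply, LinearMap.mul_apply']

lemma divg_apply (u : Fin (l1 + l2 + l3) → 𝔸) :
    Dv u = ∑ i, P i (u i) := by
  rw [divg]
  simp only [LinearMap.coe_sum, Finset.sum_apply, LinearMap.sum_apply, LinearMap.comp_apply,
    LinearMap.proj_apply]

lemma xscale_apply (ρ : Γ) (u : Fin (l1 + l2 + l3) → 𝔸) (i : Fin (l1 + l2 + l3)) :
    xscale F l1 l2 l3 Γ ρ u i = Xp ρ * u i := by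
  rw [xscale]
  simp only [LinearMap.pi_apply, LinearMap.comp_apply, LinearMap.proj_apply,
    LinearMap.mul_apply']

lemma act_act (u v : Fin (l1 + l2 + l3) → 𝔸) (a : 𝔸) :
    Act u (Act v a)
      = (∑ i, ∑ j, u i * (P i (v j) * P j a))
        + ∑ i, ∑ j, u i * (v j * P i (P j a)) := by
  rw [← Finset.sum_add_distrib]
  simp only [act_apply]
  refine Finset.sum_congr rfl fun i _ => ?_
  rw [map_sum, Finset.mul_sum, ← Finset.sum_add_distrib]
  refine Finset.sum_congr rfl fun j _ => ?_
  rw [part_mul]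
  ring

lemma sum2_symm (u v : Fin (l1 + l2 + l3) → 𝔸) (a : 𝔸) :
    (∑ i, ∑ j, u i * (v j * P i (P j a))) = ∑ i, ∑ j, v i * (u j * P i (P j a)) := by
  rw [Finset.sum_comm]
  refine Finset.sum_congr rfl fun i _ => Finset.sum_congr rfl fun j _ => ?_
  rw [part_comm]
  ring

lemma act_w_apply (u v : Fin (l1 + l2 + l3) → 𝔸) (a : 𝔸) :
    Act (fun j => Act u (v j) - Act v (u j)) a
      = (∑ i, ∑ j, u i * (P i (v j) * P j a)) - ∑ i, ∑ j, v i * (P i (u j) * P j a) := by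
  rw [act_apply]
  have step1 : ∀ j : Fin (l1 + l2 + l3),
      (fun j => Act u (v j) - Act v (u j)) j * P j a
        = ∑ i, (u i * (P i (v j) * P j a) - v i * (P i (u j) * P j a)) := by
    intro j
    simp only [act_apply, sub_mul, Finset.sum_mul, ← Finset.sum_sub_distrib]
    exact Finset.sum_congr rfl fun i _ => by ring
  rw [Finset.sum_congr rfl fun j _ => step1 j, Finset.sum_comm]
  simp only [Finset.sum_sub_distrib]

lemma bracket_act (u v : Fin (l1 + l2 + l3) → 𝔸) :
    ⁅Act u, Act v⁆ = Act (fun j => Act u (v j) - Act v (u j)) := by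
  refine LinearMap.ext fun a => ?_
  show (Act u * Act v - Act v * Act u) a = _
  rw [LinearMap.sub_apply, Module.End.mul_apply, Module.End.mul_apply,
    act_act, act_act, act_w_apply, sum2_symm F l1 l2 l3 Γ v u a]
  abel

lemma divg_pair (u v : Fin (l1 + l2 + l3) → 𝔸) :
    Dv (fun j => Act u (v j) - Act v (u j)) = Act u (Dv v) - Act v (Dv u) := by
  have expand : ∀ u v : Fin (l1 + l2 + l3) → 𝔸,
      (∑ j, P j (Act u (v j)))
        = (∑ j, ∑ i, P j (u i) * P i (v j)) + ∑ j, ∑ i, u i * P j (P i (v j)) := by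
    intro u v
    rw [← Finset.sum_add_distrib]
    refine Finset.sum_congr rfl fun j _ => ?_
    rw [act_apply, map_sum, ← Finset.sum_add_distrib]
    exact Finset.sum_congr rfl fun i _ => part_mul F l1 l2 l3 Γ j _ _
  have claim1 : ∀ u v : Fin (l1 + l2 + l3) → 𝔸,
      (∑ j, ∑ i, u i * P j (P i (v j))) = Act u (Dv v) := by
    intro u v
    calc ∑ j, ∑ i, u i * P j (P i (v j))
        = ∑ j, ∑ i, u i * P i (P j (v j)) :=
          Finset.sum_congr rfl fun j _ => Finset.sum_congr rfl fun i _ => by rw [part_comm]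
      _ = ∑ i, ∑ j, u i * P i (P j (v j)) := Finset.sum_comm
      _ = Act u (Dv v) := by
          rw [act_apply, divg_apply]
          refine Finset.sum_congr rfl fun i _ => ?_
          rw [map_sum, Finset.mul_sum]
  have claim2 : (∑ j, ∑ i, P j (u i) * P i (v j)) = ∑ j, ∑ i, P j (v i) * P i (u j) := by
    rw [Finset.sum_comm]
    exact Finset.sum_congr rfl fun _ _ => Finset.sum_congr rfl fun _ _ => mul_comm _ _
  calc Dv (fun j => Act u (v j) - Act v (u j))
      = ∑ j, (P j (Act u (v j)) - P j (Act v (u j))) := by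
        rw [divg_apply]
        exact Finset.sum_congr rfl fun j _ => by simp only [map_sub]
    _ = (∑ j, P j (Act u (v j))) - ∑ j, P j (Act v (u j)) := Finset.sum_sub_distrib _ _
    _ = _ := by
        rw [expand u v, expand v u, claim1 u v, claim1 v u, claim2]
        abel

lemma div_unscale (ρ : Γ) (W : Fin (l1 + l2 + l3) → 𝔸)
    (hW : Dv W = ∑ j, Cc j ρ • W j) :
    Dv (fun j => Xp (-ρ) * W j) = 0 := by
  rw [divg_apply]
  calc ∑ j, P j ((fun j => Xp (-ρ) * W j) j)
      = ∑ j, (Xp (-ρ) * P j (W j) + (- Cc j ρ) • (Xp (-ρ) * W j)) := by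
        refine Finset.sum_congr rfl fun j _ => ?_
        show P j (Xp (-ρ) * W j) = _
        rw [part_mul_xpow, cc_neg]
    _ = (Xp (-ρ) * ∑ j, P j (W j)) + ∑ j, (- Cc j ρ) • (Xp (-ρ) * W j) := by
        rw [Finset.sum_add_distrib, Finset.mul_sum]
    _ = 0 := by
        rw [← divg_apply, hW, Finset.mul_sum, ← Finset.sum_add_distrib]
        refine Finset.sum_eq_zero fun j _ => ?_
        rw [mul_smul_comm, neg_smul, add_neg_cancel]

lemma key0 (ρ : Γ) (u v : Fin (l1 + l2 + l3) → 𝔸) (hu : Dv u = 0) (hv : Dv v = 0) :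
    ∃ z : Fin (l1 + l2 + l3) → 𝔸, Dv z = 0 ∧
      (Act fun j => Xp ρ * z j)
        = ⁅Act fun j => Xp ρ * u j, Act fun j => Xp ρ * v j⁆ := by
  have hdscale : ∀ (y : Fin (l1 + l2 + l3) → 𝔸), Dv y = 0 →
      Dv (fun j => Xp ρ * y j) = ∑ j, Cc j ρ • (Xp ρ * y j) := by
    intro y hy
    rw [divg_apply]
    calc ∑ j, P j ((fun j => Xp ρ * y j) j)
        = ∑ j, (Xp ρ * P j (y j) + Cc j ρ • (Xp ρ * y j)) := by
          refine Finset.sum_congr rfl fun j _ => ?_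
          show P j (Xp ρ * y j) = _
          rw [part_mul_xpow]
      _ = (Xp ρ * ∑ j, P j (y j)) + ∑ j, Cc j ρ • (Xp ρ * y j) := by
          rw [Finset.sum_add_distrib, Finset.mul_sum]
      _ = ∑ j, Cc j ρ • (Xp ρ * y j) := by
          rw [← divg_apply, hy, mul_zero, zero_add]
  have hdw : Dv (fun j => (Act fun k => Xp ρ * u k) (Xp ρ * v j)
        - (Act fun k => Xp ρ * v k) (Xp ρ * u j))
      = ∑ j, Cc j ρ • ((Act fun k => Xp ρ * u k) (Xp ρ * v j)
        - (Act fun k => Xp ρ * v k) (Xp ρ * u j)) := by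
    rw [divg_pair F l1 l2 l3 Γ (fun k => Xp ρ * u k) (fun k => Xp ρ * v k),
      hdscale v hv, hdscale u hu, map_sum, map_sum]
    simp only [map_smul]
    rw [← Finset.sum_sub_distrib]
    exact Finset.sum_congr rfl fun j _ => (smul_sub _ _ _).symm
  refine ⟨fun j => Xp (-ρ) * ((Act fun k => Xp ρ * u k) (Xp ρ * v j)
      - (Act fun k => Xp ρ * v k) (Xp ρ * u j)),
    div_unscale F l1 l2 l3 Γ ρ _ hdw, ?_⟩
  rw [bracket_act F l1 l2 l3 Γ (fun k => Xp ρ * u k) (fun k => Xp ρ * v k)]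
  congr 1
  funext j
  show Xp ρ * (Xp (-ρ) * _) = _
  rw [← mul_assoc, xpow_mul_xpow, add_neg_cancel, xpow_zero', one_mul]

end Aux

end SXDiv

namespace SXDiv

theorem divergenceFree_closed_under_bracket
    (F : Type*) [Field F] [CharZero F]
    (l1 l2 l3 : ℕ) (hl : 0 < l1 + l2 + l3)
    (Γ : AddSubgroup (Fin (l2 + l3) → F))
    (hΓ : Submodule.span F (Γ : Set (Fin (l2 + l3) → F)) = ⊤)
    (ρ : Γ) :
    ∀ X ∈ Ssub F l1 l2 l3 Γ ρ, ∀ Y ∈ Ssub F l1 l2 l3 Γ ρ,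
      ⁅X, Y⁆ ∈ Ssub F l1 l2 l3 Γ ρ := by
  intro X hX Y hY
  simp only [Ssub, Submodule.mem_map, LinearMap.mem_ker, LinearMap.comp_apply] at hX hY ⊢
  obtain ⟨u, hu, rfl⟩ := hX
  obtain ⟨v, hv, rfl⟩ := hY
  obtain ⟨z, hz, hzb⟩ := key0 F l1 l2 l3 Γ ρ u v hu hv
  refine ⟨z, hz, ?_⟩
  have hxs : ∀ y : Fin (l1 + l2 + l3) → A F l1 l2 l3 Γ,
      xscale F l1 l2 l3 Γ ρ y = fun j => xpow F l1 l2 l3 Γ ρ * y j :=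
    fun y => funext fun j => xscale_apply F l1 l2 l3 Γ ρ y j
  rw [hxs z, hxs u, hxs v]
  exact hzb


end SXDiv
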